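/- Let a be a positive integer, b an integer coprime to a, b' an integer with b·b' ≡ 1 (mod a), and γ, δ integers with γ + δ ≡ −1 (mod a). Then, as complex numbers, s(b, a; γ/a, 0) + s(b, a; δ/a, 0) + (1/2)·((b'·γ/a)) + (1/2)·((b'·δ/a)) = −λ(b, a; γ) − λ(b, a; δ). -/

import Mathlib

open scoped BigOperators

/-- The sawtooth function `((x))`: `x - ⌊x⌋ - 1/2` if `x` is not an integer, `0` otherwise. -/
noncomputable def sawtooth (x : ℝ) : ℝ :=
  if Int.fract x = 0 then 0 else Int.fract x - 1/2

/-- The Dedekind–Rademacher sum `s(b, a; x, y)`. -/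
noncomputable def drSum (b : ℤ) (a : ℕ) (x y : ℝ) : ℝ :=
  ∑ j ∈ Finset.range a, sawtooth (x + b * ((j : ℝ) + y) / a) * sawtooth (((j : ℝ) + y) / a)

/-- `λ(b, a; n) = (1/a) ∑_{j=1}^{a-1} ω^{nj} / ((1 - ω^{-j})(1 - ω^{-bj}))`,
where `ω = exp(2πi/a)`. -/
noncomputable def lamSum (b : ℤ) (a : ℕ) (n : ℤ) : ℂ :=
  (1 / (a : ℂ)) * ∑ j ∈ Finset.Ioo 0 a,
    Complex.exp (2 * Real.pi * Complex.I / a) ^ (n * (j : ℤ)) /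
      ((1 - Complex.exp (2 * Real.pi * Complex.I / a) ^ (-(j : ℤ))) *
       (1 - Complex.exp (2 * Real.pi * Complex.I / a) ^ (-(b * (j : ℤ)))))

open Finset
-- basic lemmas
example {a : ℕ} (ha : 0 < a) {ζ : ℂ} (hζ : IsPrimitiveRoot ζ a) : ζ ≠ 0 := hζ.ne_zero ha.ne'

lemma zpow_congr {a : ℕ} (ha : 0 < a) {ζ : ℂ} (hζ : IsPrimitiveRoot ζ a) {m m' : ℤ}
    (h : (a:ℤ) ∣ m - m') : ζ ^ m = ζ ^ m' := by
  obtain ⟨t, ht⟩ := h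
  have h0 : ζ ≠ 0 := hζ.ne_zero ha.ne'
  have hm : m = m' + a * t := by linarith
  rw [hm, zpow_add₀ h0, zpow_mul, zpow_natCast, hζ.pow_eq_one, one_zpow, mul_one]

lemma zpow_ne_one {a : ℕ} (ha : 0 < a) {ζ : ℂ} (hζ : IsPrimitiveRoot ζ a) {m : ℤ}
    (h : ¬ (a:ℤ) ∣ m) : ζ ^ m ≠ 1 := fun hh => h ((hζ.zpow_eq_one_iff_dvd m).mp hh)

lemma range_split {a : ℕ} (ha : 0 < a) (f : ℕ → ℂ) :
    ∑ j ∈ Finset.range a, f j = f 0 + ∑ j ∈ Finset.Ioo 0 a, f j := by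
  have h : Finset.Ioo 0 a = (Finset.range a).erase 0 := by
    ext x; simp only [Finset.mem_Ioo, Finset.mem_erase, Finset.mem_range]; omega
  rw [h, Finset.add_sum_erase _ f (by simpa using ha)]

lemma geomIf {a : ℕ} (ha : 0 < a) {ζ : ℂ} (hζ : IsPrimitiveRoot ζ a) (m : ℤ) :
    ∑ j ∈ Finset.range a, ζ ^ ((j:ℤ) * m) = if (a:ℤ) ∣ m then (a:ℂ) else 0 := by
  by_cases h : (a:ℤ) ∣ m
  · simp only [if_pos h]
    have : ∀ j ∈ Finset.range a, ζ ^ ((j:ℤ) * m) = 1 := fun j _ =>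
      (hζ.zpow_eq_one_iff_dvd _).mpr (Dvd.dvd.mul_left h _)
    rw [Finset.sum_congr rfl this]; simp
  · simp only [if_neg h]
    have hx1 : ζ ^ m ≠ 1 := zpow_ne_one ha hζ h
    have : ∀ j ∈ Finset.range a, ζ ^ ((j:ℤ) * m) = (ζ ^ m) ^ j := by
      intro j _; rw [mul_comm, zpow_mul, zpow_natCast]
    rw [Finset.sum_congr rfl this, geom_sum_eq hx1]
    have : (ζ ^ m) ^ a = 1 := by
      rw [← zpow_natCast, ← zpow_mul]
      exact (hζ.zpow_eq_one_iff_dvd _).mpr ⟨m, by ring⟩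
    rw [this]; simp
lemma saw_zero : sawtooth 0 = 0 := by simp [sawtooth]

lemma saw_val {a j : ℕ} (h0 : 0 < j) (h1 : j < a) :
    sawtooth ((j:ℝ)/a) = (j:ℝ)/a - 1/2 := by
  have ha0 : 0 < a := h0.trans h1
  have ha : (0:ℝ) < a := by exact_mod_cast ha0
  have hf : Int.fract ((j:ℝ)/a) = (j:ℝ)/a := by
    rw [Int.fract_eq_self]
    constructor
    · positivity
    · rw [div_lt_one ha]; exact_mod_cast h1
  have : (j:ℝ)/a ≠ 0 := by positivity
  rw [sawtooth, hf, if_neg this]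

lemma saw_int {a : ℕ} (ha : 0 < a) {n : ℤ} (h : (a:ℤ) ∣ n) : sawtooth ((n:ℝ)/a) = 0 := by
  obtain ⟨q, rfl⟩ := h
  have ha' : (a:ℝ) ≠ 0 := by positivity
  have : ((a * q : ℤ):ℝ)/a = (q:ℝ) := by push_cast; field_simp
  rw [this, sawtooth, if_pos (by simp)]

lemma saw_mod {a : ℕ} (ha : 0 < a) (n : ℤ) {r : ℕ} (h0 : 0 < r) (h1 : r < a)
    (hc : (a:ℤ) ∣ n - r) : sawtooth ((n:ℝ)/a) = (r:ℝ)/a - 1/2 := by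
  obtain ⟨q, hq⟩ := hc
  have ha' : (a:ℝ) ≠ 0 := by positivity
  have hn : (n:ℝ)/a = (q:ℝ) + (r:ℝ)/a := by
    have : (n:ℝ) = a * q + r := by exact_mod_cast congrArg Int.cast (by linarith : n = a*q + r)
    rw [this]; field_simp
  have : sawtooth ((n:ℝ)/a) = sawtooth ((r:ℝ)/a) := by
    rw [hn, sawtooth, sawtooth, Int.fract_intCast_add]
  rw [this, saw_val h0 h1]

lemma weighted {a : ℕ} (ha : 0 < a) {x : ℂ} (hx1 : x ≠ 1) (hxa : x ^ a = 1) :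
    ∑ j ∈ Finset.range a, (j:ℂ) * x ^ j = a / (x - 1) := by
  have hs0 : ∑ j ∈ Finset.range a, x ^ j = 0 := by
    rw [geom_sum_eq hx1, hxa]; simp
  have tel : ∑ j ∈ Finset.range a, (((j+1:ℕ):ℂ) * x ^ (j+1) - (j:ℂ) * x ^ j)
      = (a:ℂ) * x ^ a - 0 := by
    simpa using Finset.sum_range_sub (fun j => (j:ℂ) * x ^ j) a
  have key : (x - 1) * ∑ j ∈ Finset.range a, (j:ℂ) * x ^ j = a := by
    rw [Finset.mul_sum]
    have step : ∀ j ∈ Finset.range a, (x - 1) * ((j:ℂ) * x ^ j)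
        = (((j+1:ℕ):ℂ) * x ^ (j+1) - (j:ℂ) * x ^ j) - x ^ (j+1) := by
      intro j _; push_cast; ring
    rw [Finset.sum_congr rfl step, Finset.sum_sub_distrib, tel]
    have : ∑ j ∈ Finset.range a, x ^ (j+1) = x * ∑ j ∈ Finset.range a, x ^ j := by
      rw [Finset.mul_sum]; exact Finset.sum_congr rfl fun j _ => by ring
    rw [this, hs0, hxa]; ring
  have hx : x - 1 ≠ 0 := sub_ne_zero.mpr hx1
  field_simp
  linear_combination key

lemma sawsum {a : ℕ} (ha : 0 < a) {ζ : ℂ} (hζ : IsPrimitiveRoot ζ a) {m : ℤ}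
    (hm : ¬ (a:ℤ) ∣ m) :
    ∑ j ∈ Finset.range a, ((sawtooth ((j:ℝ)/a) : ℝ):ℂ) * ζ ^ ((j:ℤ)*m)
      = 1/(ζ ^ m - 1) + 1/2 := by
  have ha' : (a:ℂ) ≠ 0 := by exact_mod_cast ha.ne'
  have hx1 : ζ ^ m ≠ 1 := zpow_ne_one ha hζ hm
  have hxa : (ζ ^ m) ^ a = 1 := by
    rw [← zpow_natCast, ← zpow_mul]
    exact (hζ.zpow_eq_one_iff_dvd _).mpr ⟨m, by ring⟩
  have hpow : ∀ j : ℕ, ζ ^ ((j:ℤ)*m) = (ζ ^ m) ^ j := by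
    intro j; rw [mul_comm, zpow_mul, zpow_natCast]
  have step1 : ∑ j ∈ Finset.range a, ((sawtooth ((j:ℝ)/a) : ℝ):ℂ) * ζ ^ ((j:ℤ)*m)
      = ∑ j ∈ Finset.range a, (((j:ℂ)/a - 1/2) * ζ ^ ((j:ℤ)*m)) + 1/2 := by
    rw [range_split ha, range_split ha (f := fun j => ((j:ℂ)/a - 1/2) * ζ ^ ((j:ℤ)*m))]
    have hIoo : ∀ j ∈ Finset.Ioo 0 a, ((sawtooth ((j:ℝ)/a) : ℝ):ℂ) * ζ ^ ((j:ℤ)*m)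
        = ((j:ℂ)/a - 1/2) * ζ ^ ((j:ℤ)*m) := by
      intro j hj
      rw [Finset.mem_Ioo] at hj
      rw [saw_val hj.1 hj.2]
      push_cast
      ring
    rw [Finset.sum_congr rfl hIoo]
    simp [saw_zero]
  rw [step1]
  have step2 : ∑ j ∈ Finset.range a, (((j:ℂ)/a - 1/2) * ζ ^ ((j:ℤ)*m))
      = (1/(a:ℂ)) * ∑ j ∈ Finset.range a, (j:ℂ) * (ζ^m) ^ j
        - (1/2) * ∑ j ∈ Finset.range a, ζ ^ ((j:ℤ)*m) := by
    rw [Finset.mul_sum, Finset.mul_sum, ← Finset.sum_sub_distrib]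
    refine Finset.sum_congr rfl fun j _ => ?_
    rw [← hpow]; ring
  rw [step2, weighted ha hx1 hxa, geomIf ha hζ, if_neg hm]
  field_simp
  ring

lemma not_dvd_of_Ioo {a k : ℕ} (hk : k ∈ Finset.Ioo 0 a) : ¬ (a:ℤ) ∣ (k:ℤ) := by
  rw [Finset.mem_Ioo] at hk
  intro h
  have := Int.le_of_dvd (by exact_mod_cast hk.1) h
  omega

lemma one_sub_ne {a : ℕ} (ha : 0 < a) {ζ : ℂ} (hζ : IsPrimitiveRoot ζ a) {m : ℤ}
    (h : ¬(a:ℤ) ∣ m) : 1 - ζ ^ m ≠ 0 :=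
  sub_ne_zero.mpr (Ne.symm (zpow_ne_one ha hζ h))

lemma pair_eq_one {y : ℂ} (h0 : y ≠ 0) (h1 : y ≠ 1) : 1/(1-y) + 1/(1-y⁻¹) = 1 := by
  have hy : 1 - y ≠ 0 := sub_ne_zero.mpr (Ne.symm h1)
  have hy2 : y - 1 ≠ 0 := sub_ne_zero.mpr h1
  have hinv : 1 - y⁻¹ = (y - 1)/y := by field_simp
  rw [hinv, one_div_div]
  field_simp
  ring

lemma H0 {a : ℕ} (ha : 0 < a) {ζ : ℂ} (hζ : IsPrimitiveRoot ζ a) :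
    ∑ k ∈ Finset.Ioo 0 a, 1/(1 - ζ^(k:ℤ)) = ((a:ℂ)-1)/2 := by
  have hrev : ∑ k ∈ Finset.Ioo 0 a, 1/(1-ζ^(k:ℤ))
      = ∑ k ∈ Finset.Ioo 0 a, 1/(1-ζ^(-(k:ℤ))) := by
    refine Finset.sum_nbij' (fun k => a - k) (fun k => a - k) ?_ ?_ ?_ ?_ ?_ <;>
      intro k hk <;> simp only [Finset.mem_Ioo] at hk ⊢
    · omega
    · omega
    · omega
    · omega
    · congr 2
      apply zpow_congr ha hζ
      have h1 : ((a - k : ℕ):ℤ) = (a:ℤ) - k := by omega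
      rw [h1]
      exact ⟨1, by ring⟩
  have h2 : ∑ k ∈ Finset.Ioo 0 a, (1/(1-ζ^(k:ℤ)) + 1/(1-ζ^(-(k:ℤ)))) = (a:ℂ) - 1 := by
    have hpt : ∀ k ∈ Finset.Ioo 0 a, (1/(1-ζ^(k:ℤ)) + 1/(1-ζ^(-(k:ℤ)))) = 1 := by
      intro k hk
      have h0 : ζ^(k:ℤ) ≠ 0 := zpow_ne_zero _ (hζ.ne_zero ha.ne')
      have h1 : ζ^(k:ℤ) ≠ 1 := zpow_ne_one ha hζ (not_dvd_of_Ioo hk)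
      rw [zpow_neg]
      exact pair_eq_one h0 h1
    rw [Finset.sum_congr rfl hpt, Finset.sum_const, Nat.card_Ioo, nsmul_eq_mul, mul_one]
    have h3 : a - 0 - 1 = a - 1 := by omega
    rw [h3, Nat.cast_sub ha]
    simp
  rw [Finset.sum_add_distrib, ← hrev] at h2
  linear_combination h2/2

lemma Hval {a : ℕ} (ha : 0 < a) {ζ : ℂ} (hζ : IsPrimitiveRoot ζ a) :
    ∀ r : ℕ, 1 ≤ r → r ≤ a →
      ∑ k ∈ Finset.Ioo 0 a, ζ^((k:ℤ)*r)/(1 - ζ^(k:ℤ)) = (r:ℂ) - 1 - ((a:ℂ)-1)/2 := by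
  have hdiff : ∀ m : ℤ, ∑ k ∈ Finset.Ioo 0 a, ζ^((k:ℤ)*m)/(1 - ζ^(k:ℤ))
      - ∑ k ∈ Finset.Ioo 0 a, ζ^((k:ℤ)*(m+1))/(1 - ζ^(k:ℤ))
      = (if (a:ℤ) ∣ m then (a:ℂ) else 0) - 1 := by
    intro m
    rw [← Finset.sum_sub_distrib]
    have hpt : ∀ k ∈ Finset.Ioo 0 a,
        ζ^((k:ℤ)*m)/(1 - ζ^(k:ℤ)) - ζ^((k:ℤ)*(m+1))/(1 - ζ^(k:ℤ)) = ζ^((k:ℤ)*m) := by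
      intro k hk
      have hne : 1 - ζ^(k:ℤ) ≠ 0 := one_sub_ne ha hζ (not_dvd_of_Ioo hk)
      have h0 : ζ ≠ 0 := hζ.ne_zero ha.ne'
      have hzz : ζ^((k:ℤ)*(m+1)) = ζ^((k:ℤ)*m) * ζ^(k:ℤ) := by
        rw [← zpow_add₀ h0]; ring_nf
      rw [hzz, div_sub_div_same,
        show ζ^((k:ℤ)*m) - ζ^((k:ℤ)*m) * ζ^(k:ℤ) = ζ^((k:ℤ)*m) * (1 - ζ^(k:ℤ)) by ring,
        mul_div_assoc, div_self hne, mul_one]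
    rw [Finset.sum_congr rfl hpt]
    have hg := geomIf ha hζ m
    rw [range_split ha (f := fun j => ζ^((j:ℤ)*m))] at hg
    simp only [Nat.cast_zero, zero_mul, zpow_zero] at hg
    linear_combination hg
  have base : ∑ k ∈ Finset.Ioo 0 a, ζ^((k:ℤ)*((1:ℕ):ℤ))/(1 - ζ^(k:ℤ))
      = ((1:ℕ):ℂ) - 1 - ((a:ℂ)-1)/2 := by
    have h := hdiff 0
    have h0 : ∑ k ∈ Finset.Ioo 0 a, ζ^((k:ℤ)*(0:ℤ))/(1 - ζ^(k:ℤ))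
        = ∑ k ∈ Finset.Ioo 0 a, 1/(1 - ζ^(k:ℤ)) := by
      refine Finset.sum_congr rfl fun k _ => by simp
    rw [h0, H0 ha hζ, if_pos (dvd_zero _)] at h
    have h1 : ((0:ℤ)+1) = ((1:ℕ):ℤ) := by norm_num
    rw [h1] at h
    push_cast at h ⊢
    linear_combination -h
  intro r
  induction r with
  | zero => omega
  | succ n ih =>
    intro _ hle
    rcases Nat.eq_or_lt_of_le (by omega : 1 ≤ n + 1) with h1 | h1
    · rw [← h1] at *
      exact_mod_cast base
    · have hn1 : 1 ≤ n := by omega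
      have hna : n ≤ a := by omega
      have hrec := ih hn1 hna
      have hd := hdiff (n:ℤ)
      rw [if_neg] at hd
      · have hcast : ((n:ℤ)+1) = (((n+1:ℕ)):ℤ) := by push_cast; ring
        rw [hcast, hrec] at hd
        push_cast at hd ⊢
        linear_combination -hd
      · intro hdvd
        have := Int.le_of_dvd (by exact_mod_cast hn1) hdvd
        omega

lemma geomIoo {a : ℕ} (ha : 0 < a) {ζ : ℂ} (hζ : IsPrimitiveRoot ζ a) (m : ℤ) :
    ∑ k ∈ Finset.Ioo 0 a, ζ^((k:ℤ)*m) = (if (a:ℤ) ∣ m then (a:ℂ) else 0) - 1 := by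
  have hg := geomIf ha hζ m
  rw [range_split ha (f := fun j => ζ^((j:ℤ)*m))] at hg
  simp only [Nat.cast_zero, zero_mul, zpow_zero] at hg
  linear_combination hg

lemma saw_fourier {a : ℕ} (ha : 0 < a) {ζ : ℂ} (hζ : IsPrimitiveRoot ζ a) (n : ℤ) :
    ((sawtooth ((n:ℝ)/a) : ℝ) : ℂ)
      = (1/(a:ℂ)) * ∑ k ∈ Finset.Ioo 0 a, ζ^((k:ℤ)*n) * (ζ^(k:ℤ)/(1 - ζ^(k:ℤ)) + 1/2) := by
  have h0 : ζ ≠ 0 := hζ.ne_zero ha.ne'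
  have ha' : (a:ℂ) ≠ 0 := by exact_mod_cast ha.ne'
  set r : ℕ := (n % a).toNat with hr
  have haz : (a:ℤ) ≠ 0 := by exact_mod_cast ha.ne'
  have hr0 : 0 ≤ n % a := Int.emod_nonneg n haz
  have hrlt : n % a < a := Int.emod_lt_of_pos n (by exact_mod_cast ha)
  have hrcast : ((r:ℤ)) = n % a := Int.toNat_of_nonneg hr0
  have hra : r < a := by omega
  have hcong : (a:ℤ) ∣ n - r := ⟨n / a, by rw [hrcast]; have h := Int.mul_ediv_add_emod n (a:ℤ); linarith⟩
  have hsum : ∀ k ∈ Finset.Ioo 0 a, ζ^((k:ℤ)*n) * (ζ^(k:ℤ)/(1 - ζ^(k:ℤ)) + 1/2)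
      = ζ^((k:ℤ)*((r+1:ℕ):ℤ))/(1-ζ^(k:ℤ)) + ζ^((k:ℤ)*((r:ℕ):ℤ)) * (1/2) := by
    intro k hk
    have e1 : ζ^((k:ℤ)*n) = ζ^((k:ℤ)*((r:ℕ):ℤ)) := by
      apply zpow_congr ha hζ
      have hq : (k:ℤ)*n - (k:ℤ)*((r:ℕ):ℤ) = (k:ℤ)*(n - r) := by ring
      rw [hq]
      exact Dvd.dvd.mul_left hcong _
    have e2 : ζ^((k:ℤ)*n) * ζ^(k:ℤ) = ζ^((k:ℤ)*((r+1:ℕ):ℤ)) := by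
      rw [← zpow_add₀ h0]
      apply zpow_congr ha hζ
      have hq : (k:ℤ)*n + k - (k:ℤ)*((r+1:ℕ):ℤ) = (k:ℤ)*(n - r) := by push_cast; ring
      rw [hq]
      exact Dvd.dvd.mul_left hcong _
    calc ζ^((k:ℤ)*n) * (ζ^(k:ℤ)/(1 - ζ^(k:ℤ)) + 1/2)
        = (ζ^((k:ℤ)*n) * ζ^(k:ℤ))/(1-ζ^(k:ℤ)) + ζ^((k:ℤ)*n) * (1/2) := by ring
      _ = _ := by rw [← e1, ← e2]
  rw [Finset.sum_congr rfl hsum, Finset.sum_add_distrib, ← Finset.sum_mul,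
    Hval ha hζ (r+1) (by omega) (by omega), geomIoo ha hζ]
  by_cases hr0' : r = 0
  · have hn : (a:ℤ) ∣ n := by rw [hr0'] at hcong; simpa using hcong
    rw [saw_int ha hn, hr0']
    norm_num
    right
    ring
  · have hndvd : ¬ (a:ℤ) ∣ ((r:ℕ):ℤ) := by
      intro h
      have := Int.le_of_dvd (by exact_mod_cast Nat.pos_of_ne_zero hr0') h
      omega
    rw [if_neg hndvd, saw_mod ha n (Nat.pos_of_ne_zero hr0') hra hcong]
    push_cast
    field_simp
    ring

lemma drSum_eq {a : ℕ} (ha : 0 < a) {ζ : ℂ} (hζ : IsPrimitiveRoot ζ a) {b : ℤ}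
    (hab : ∀ k : ℕ, k ∈ Finset.Ioo 0 a → ¬ (a:ℤ) ∣ (k:ℤ)*b) (n : ℤ) :
    ((drSum b a ((n:ℝ)/a) 0 : ℝ) : ℂ) = (1/(a:ℂ)) * ∑ k ∈ Finset.Ioo 0 a,
      ζ^((k:ℤ)*n) * (ζ^(k:ℤ)/(1-ζ^(k:ℤ)) + 1/2) * (1/(ζ^((k:ℤ)*b) - 1) + 1/2) := by
  have h0 : ζ ≠ 0 := hζ.ne_zero ha.ne'
  rw [drSum]
  push_cast
  have harg : ∀ j : ℕ, (n:ℝ)/a + (b:ℝ) * ((j:ℝ)+0)/a = (((n+b*j : ℤ)):ℝ)/a := by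
    intro j; push_cast; ring
  have stepA : ∀ j ∈ Finset.range a,
      ((sawtooth ((n:ℝ)/a + (b:ℝ) * ((j:ℝ)+0)/a) : ℝ):ℂ) * ((sawtooth (((j:ℝ)+0)/a) : ℝ):ℂ)
      = ∑ k ∈ Finset.Ioo 0 a, (1/(a:ℂ)) * (ζ^((k:ℤ)*n) * (ζ^(k:ℤ)/(1-ζ^(k:ℤ)) + 1/2)
          * (((sawtooth ((j:ℝ)/a) : ℝ):ℂ) * ζ^((j:ℤ)*((k:ℤ)*b)))) := by
    intro j _
    rw [harg j, add_zero, saw_fourier ha hζ (n + b*j), Finset.mul_sum, Finset.sum_mul]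
    refine Finset.sum_congr rfl fun k _ => ?_
    have hsplit : ζ^((k:ℤ)*(n+b*j)) = ζ^((k:ℤ)*n) * ζ^((j:ℤ)*((k:ℤ)*b)) := by
      rw [← zpow_add₀ h0]
      congr 1
      ring
    rw [hsplit]
    ring
  rw [Finset.sum_congr rfl stepA, Finset.sum_comm, Finset.mul_sum]
  refine Finset.sum_congr rfl fun k hk => ?_
  rw [← Finset.mul_sum, ← Finset.mul_sum, sawsum ha hζ (hab k hk)]

lemma sum_reindex {a : ℕ} (ha : 0 < a) {b b' : ℤ} (hbb' : (a:ℤ) ∣ b*b' - 1)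
    (f : ℤ → ℂ) (hf : ∀ m m' : ℤ, (a:ℤ) ∣ m - m' → f m = f m') :
    ∑ k ∈ Finset.Ioo 0 a, f (b * k) = ∑ k ∈ Finset.Ioo 0 a, f k := by
  have haz : (0:ℤ) < a := by exact_mod_cast ha
  obtain ⟨s, hs⟩ := hbb'
  -- cancellation facts
  have hcanc : ∀ k : ℤ, (a:ℤ) ∣ b*k → (a:ℤ) ∣ k := by
    intro k hk
    obtain ⟨t, ht⟩ := hk
    exact ⟨b'*t - s*k, by linear_combination b' * ht - (k:ℤ) * hs⟩
  have hcanc' : ∀ k : ℤ, (a:ℤ) ∣ b'*k → (a:ℤ) ∣ k := by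
    intro k hk
    obtain ⟨t, ht⟩ := hk
    exact ⟨b*t - s*k, by linear_combination b * ht - (k:ℤ) * hs⟩
  have hmem : ∀ (c : ℤ), (∀ k : ℤ, (a:ℤ) ∣ c*k → (a:ℤ) ∣ k) →
      ∀ k ∈ Finset.Ioo 0 a, ((c*k) % a).toNat ∈ Finset.Ioo 0 a := by
    intro c hc k hk
    simp only [Finset.mem_Ioo] at hk ⊢
    have h1 : 0 ≤ (c*k) % a := Int.emod_nonneg _ haz.ne'
    have h2 : (c*k) % a < a := Int.emod_lt_of_pos _ haz
    have h3 : (c*k) % a ≠ 0 := by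
      intro h
      have : (a:ℤ) ∣ c*k := Int.dvd_of_emod_eq_zero h
      have := hc _ this
      have := Int.le_of_dvd (by exact_mod_cast hk.1) this
      omega
    omega
  have hmodval : ∀ (c : ℤ) (k : ℕ), ((((c*k) % a).toNat : ℤ)) = (c*k) % a := by
    intro c k
    exact Int.toNat_of_nonneg (Int.emod_nonneg _ haz.ne')
  have hinv : ∀ (c d : ℤ), (a:ℤ) ∣ c*d - 1 → ∀ k ∈ Finset.Ioo 0 a,
      ((d * (((c*k) % a).toNat : ℤ)) % a).toNat = k := by
    intro c d hcd k hk
    simp only [Finset.mem_Ioo] at hk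
    obtain ⟨u, hu⟩ := hcd
    have hm := hmodval c k
    have hdef : (c*k) % a = c*k - a * ((c*k)/a) := Int.emod_def _ _
    have hdvd : (a:ℤ) ∣ d * (((c*k) % a).toNat : ℤ) - k := by
      refine ⟨u*k - d*((c*k)/a), ?_⟩
      rw [hm, hdef]
      linear_combination (k:ℤ) * hu
    have hmod : (d * (((c*k) % a).toNat : ℤ)) % a = (k:ℤ) % a :=
      Int.ModEq.symm (Int.modEq_iff_dvd.mpr hdvd)
    have hk' : ((k:ℤ)) % a = k := Int.emod_eq_of_lt (by positivity) (by exact_mod_cast hk.2)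
    omega
  refine Finset.sum_nbij' (fun k => ((b*k) % a).toNat) (fun k => ((b'*k) % a).toNat)
    (hmem b hcanc) (hmem b' hcanc') (hinv b b' ⟨s, hs⟩)
    (hinv b' b ⟨s, by rw [mul_comm b' b]; exact hs⟩) ?_
  · intro k hk
    apply hf
    rw [hmodval b k]
    exact ⟨(b*k)/a, by rw [Int.emod_def]; ring⟩

lemma cancel_sum {a : ℕ} (ha : 0 < a) {ζ : ℂ} (hζ : IsPrimitiveRoot ζ a) {γ δ : ℤ}
    (hγδ : (a:ℤ) ∣ γ + δ + 1) :
    ∑ k ∈ Finset.Ioo 0 a, ζ^((k:ℤ)*δ) / (1 - ζ^(-(k:ℤ)))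
      = - ∑ k ∈ Finset.Ioo 0 a, ζ^((k:ℤ)*γ) / (1 - ζ^(-(k:ℤ))) := by
  have h0 : ζ ≠ 0 := hζ.ne_zero ha.ne'
  rw [← Finset.sum_neg_distrib]
  refine Finset.sum_nbij' (fun k => a - k) (fun k => a - k) ?_ ?_ ?_ ?_ ?_ <;>
    intro k hk <;> simp only [Finset.mem_Ioo] at hk ⊢
  · omega
  · omega
  · omega
  · omega
  · -- ζ^(k*δ)/(1-ζ^(-k)) = -(ζ^((a-k)*γ)/(1-ζ^(-(a-k))))
    have hksub : (((a - k : ℕ)):ℤ) = (a:ℤ) - k := by omega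
    have hne1 : ¬ (a:ℤ) ∣ (-(k:ℤ)) := by
      intro h; have := (dvd_neg).mp h
      exact not_dvd_of_Ioo (by simp [Finset.mem_Ioo]; omega) this
    have hne2 : ¬ (a:ℤ) ∣ ((k:ℤ)) := not_dvd_of_Ioo (by simp [Finset.mem_Ioo]; omega)
    have hd1 : 1 - ζ^(-(k:ℤ)) ≠ 0 := one_sub_ne ha hζ hne1
    have hd2 : 1 - ζ^((k:ℤ)) ≠ 0 := one_sub_ne ha hζ hne2
    have e1 : ζ^((((a-k:ℕ)):ℤ)*γ) = ζ^(-((k:ℤ)*γ)) := by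
      apply zpow_congr ha hζ
      rw [hksub]
      exact ⟨γ, by ring⟩
    have e2 : ζ^(-(((a-k:ℕ)):ℤ)) = ζ^((k:ℤ)) := by
      apply zpow_congr ha hζ
      rw [hksub]
      exact ⟨-1, by ring⟩
    rw [e1, e2]
    have g1 : ζ^(-((k:ℤ)*γ)) = ζ^((k:ℤ)*δ) * ζ^((k:ℤ)) := by
      rw [← zpow_add₀ h0]
      apply zpow_congr ha hζ
      rw [show -((k:ℤ)*γ) - ((k:ℤ)*δ + k) = (-(k:ℤ))*(γ+δ+1) by ring]
      exact Dvd.dvd.mul_left hγδ _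
    have hz : ζ^((k:ℤ)) ≠ 0 := zpow_ne_zero _ h0
    rw [zpow_neg] at hd1
    rw [g1, zpow_neg, ← neg_div, div_eq_div_iff hd1 hd2]
    field_simp
    ring

lemma key_alg {u v : ℂ} (hu0 : u ≠ 0) (hv0 : v ≠ 0) (hu : u ≠ 1) (hv : v ≠ 1) :
    (u⁻¹/(1-u⁻¹) + 1/2) * (1/(v⁻¹-1) + 1/2) + (1/2) * (v⁻¹/(1-v⁻¹) + 1/2)
      = -(1/((1-u)*(1-v))) + (1/2) * (1/(1-u)) := by
  have h1 : 1 - u ≠ 0 := sub_ne_zero.mpr (Ne.symm hu)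
  have h2 : 1 - v ≠ 0 := sub_ne_zero.mpr (Ne.symm hv)
  have h3 : 1 - u⁻¹ ≠ 0 := sub_ne_zero.mpr (Ne.symm (by simpa using hu))
  have h4 : 1 - v⁻¹ ≠ 0 := sub_ne_zero.mpr (Ne.symm (by simpa using hv))
  have h5 : v⁻¹ - 1 ≠ 0 := sub_ne_zero.mpr (by simpa using hv)
  have r1 : 1 - u⁻¹ = -(1-u)/u := by field_simp; ring
  have r2 : 1 - v⁻¹ = -(1-v)/v := by field_simp; ring
  have r3 : v⁻¹ - 1 = (1-v)/v := by field_simp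
  have h6 : u - 1 ≠ 0 := sub_ne_zero.mpr hu
  have h7 : v - 1 ≠ 0 := sub_ne_zero.mpr hv
  have h8 : -1 + u ≠ 0 := by intro h; exact h6 (by linear_combination h)
  have h9 : -1 + v ≠ 0 := by intro h; exact h7 (by linear_combination h)
  rw [r1, r2, r3]
  field_simp
  ring

lemma saw_b'_eq {a : ℕ} (ha : 0 < a) {ζ : ℂ} (hζ : IsPrimitiveRoot ζ a) {b b' : ℤ}
    (hbb' : (a:ℤ) ∣ b*b' - 1) (n : ℤ) :
    ((sawtooth ((b':ℝ) * (n:ℝ) / a) : ℝ) : ℂ)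
      = (1/(a:ℂ)) * ∑ k ∈ Finset.Ioo 0 a,
          ζ^((k:ℤ)*n) * (ζ^((k:ℤ)*b)/(1-ζ^((k:ℤ)*b)) + 1/2) := by
  have harg : (b':ℝ)*(n:ℝ)/a = (((b'*n : ℤ)):ℝ)/a := by push_cast; ring
  rw [harg, saw_fourier ha hζ (b'*n)]
  congr 1
  have hf : ∀ m m' : ℤ, (a:ℤ) ∣ m - m' →
      ζ^(m*(b'*n)) * (ζ^m/(1-ζ^m)+1/2) = ζ^(m'*(b'*n)) * (ζ^(m')/(1-ζ^(m'))+1/2) := by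
    intro m m' h
    rw [zpow_congr ha hζ (show (a:ℤ) ∣ m*(b'*n) - m'*(b'*n) from by
          rw [← sub_mul]; exact h.mul_right _),
        zpow_congr ha hζ h]
  have hre := sum_reindex ha hbb' (fun m => ζ^(m*(b'*n)) * (ζ^m/(1-ζ^m)+1/2)) hf
  beta_reduce at hre
  rw [← hre]
  refine Finset.sum_congr rfl fun k hk => ?_
  have e1 : ζ^((b*(k:ℤ))*(b'*n)) = ζ^((k:ℤ)*n) := by
    apply zpow_congr ha hζ
    rw [show b*(k:ℤ)*(b'*n) - (k:ℤ)*n = (b*b'-1)*((k:ℤ)*n) by ring]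
    exact hbb'.mul_right _
  have e2 : ζ^(b*(k:ℤ)) = ζ^((k:ℤ)*b) := by rw [mul_comm]
  rw [e1, e2]


theorem drSum_pair_eq_neg_lam_pair (a : ℕ) (ha : 0 < a) (b b' γ δ : ℤ)
    (hb : Int.gcd b a = 1) (hbb' : b * b' ≡ 1 [ZMOD (a : ℤ)])
    (hγδ : γ + δ ≡ -1 [ZMOD (a : ℤ)]) :
    ((drSum b a ((γ : ℝ) / a) 0 + drSum b a ((δ : ℝ) / a) 0
        + (1/2) * sawtooth ((b' : ℝ) * (γ : ℝ) / a)
        + (1/2) * sawtooth ((b' : ℝ) * (δ : ℝ) / a) : ℝ) : ℂ)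
      = - lamSum b a γ - lamSum b a δ := by
  have hζ : IsPrimitiveRoot (Complex.exp (2 * Real.pi * Complex.I / a)) a :=
    Complex.isPrimitiveRoot_exp a ha.ne'
  set ζ : ℂ := Complex.exp (2 * Real.pi * Complex.I / a) with hzdef
  have h0 : ζ ≠ 0 := hζ.ne_zero ha.ne'
  have hbb'd : (a:ℤ) ∣ b*b' - 1 := Int.ModEq.dvd hbb'.symm
  have hgd : (a:ℤ) ∣ γ + δ + 1 := by
    obtain ⟨t, ht⟩ := Int.ModEq.dvd hγδ
    exact ⟨-t, by linarith⟩
  have hab : ∀ k : ℕ, k ∈ Finset.Ioo 0 a → ¬ (a:ℤ) ∣ (k:ℤ)*b := by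
    intro k hk h
    obtain ⟨t, ht⟩ := h
    obtain ⟨s, hs⟩ := hbb'd
    exact not_dvd_of_Ioo hk ⟨b'*t - (k:ℤ)*s, by linear_combination b' * ht - (k:ℤ) * hs⟩
  have hAB : ∀ n : ℤ,
      (∑ k ∈ Finset.Ioo 0 a,
          ζ^((k:ℤ)*n) * (ζ^(k:ℤ)/(1-ζ^(k:ℤ)) + 1/2) * (1/(ζ^((k:ℤ)*b) - 1) + 1/2))
        + (1/2) * (∑ k ∈ Finset.Ioo 0 a,
            ζ^((k:ℤ)*n) * (ζ^((k:ℤ)*b)/(1-ζ^((k:ℤ)*b)) + 1/2))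
      = -(∑ k ∈ Finset.Ioo 0 a,
            ζ^(n*(k:ℤ)) / ((1 - ζ^(-(k:ℤ))) * (1 - ζ^(-(b*(k:ℤ))))))
        + (1/2) * (∑ k ∈ Finset.Ioo 0 a, ζ^((k:ℤ)*n) / (1 - ζ^(-(k:ℤ)))) := by
    intro n
    rw [Finset.mul_sum, Finset.mul_sum, ← Finset.sum_add_distrib, ← Finset.sum_neg_distrib,
      ← Finset.sum_add_distrib]
    refine Finset.sum_congr rfl fun k hk => ?_
    have hk' : ¬(a:ℤ) ∣ ((k:ℤ)) := not_dvd_of_Ioo hk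
    have hkb : ¬(a:ℤ) ∣ ((k:ℤ)*b) := hab k hk
    have hu0 : ζ^(-(k:ℤ)) ≠ 0 := zpow_ne_zero _ h0
    have hv0 : ζ^(-(b*(k:ℤ))) ≠ 0 := zpow_ne_zero _ h0
    have hu1 : ζ^(-(k:ℤ)) ≠ 1 := zpow_ne_one ha hζ (by rwa [dvd_neg])
    have hv1 : ζ^(-(b*(k:ℤ))) ≠ 1 := by
      apply zpow_ne_one ha hζ
      rw [dvd_neg, mul_comm]
      exact hkb
    have eu : ζ^((k:ℤ)) = (ζ^(-(k:ℤ)))⁻¹ := by rw [zpow_neg, inv_inv]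
    have ev : ζ^((k:ℤ)*b) = (ζ^(-(b*(k:ℤ))))⁻¹ := by rw [zpow_neg, inv_inv, mul_comm]
    have en : ζ^(n*(k:ℤ)) = ζ^((k:ℤ)*n) := by rw [mul_comm]
    rw [eu, ev, en]
    linear_combination ζ^((k:ℤ)*n) * key_alg hu0 hv0 hu1 hv1
  have hC := cancel_sum ha hζ hgd
  push_cast
  rw [drSum_eq ha hζ hab γ, drSum_eq ha hζ hab δ,
    saw_b'_eq ha hζ hbb'd γ, saw_b'_eq ha hζ hbb'd δ]
  simp only [lamSum]
  linear_combination (1/(a:ℂ)) * hAB γ + (1/(a:ℂ)) * hAB δ + (1/(2*(a:ℂ))) * hC
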